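/- Let σ be an interval model of an interval graph G and let C ⊆ V(G) be a set of vertices such that all events of C occupy a consecutive block of positions in σ (i.e., for every event ε ∉ events(C), either σ(ε) < min positions of events(C) or σ(ε) > max positions of events(C)). Then C is a module of G: every vertex outside C is either adjacent to all of C or to none of C. -/

import Mathlib

/-- A combinatorial interval model of a graph `G`: an injection from the `2n` events
`beg v` (encoded `Sum.inl v`) and `end v` (encoded `Sum.inr v`) onto the positions
`{1, …, 2n}` such that each interval starts before it ends, and two distinct
vertices are non-adjacent iff their intervals are disjoint. -/
structure IntervalModel {V : Type*} [Fintype V] (G : SimpleGraph V) where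
  σ : V ⊕ V → ℕ
  inj : Function.Injective σ
  lb : ∀ e, 1 ≤ σ e
  ub : ∀ e, σ e ≤ 2 * Fintype.card V
  surj : ∀ i : ℕ, 1 ≤ i → i ≤ 2 * Fintype.card V → ∃ e, σ e = i
  begEnd : ∀ v, σ (Sum.inl v) < σ (Sum.inr v)
  adjIff : ∀ u v, u ≠ v →
    (¬ G.Adj u v ↔ σ (Sum.inr v) < σ (Sum.inl u) ∨ σ (Sum.inr u) < σ (Sum.inl v))

/-- The section of an interval model at position `p`:
vertices whose interval is "pinned" just after position `p`. -/
def intervalSection {V : Type*} [Fintype V] {G : SimpleGraph V}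
    (M : IntervalModel G) (p : ℕ) : Set V :=
  {v | M.σ (Sum.inl v) ≤ p ∧ p < M.σ (Sum.inr v)}

/-- The events of a set of vertices. -/
def eventsOf {V : Type*} (X : Set V) : Set (V ⊕ V) :=
  (Sum.inl : V → V ⊕ V) '' X ∪ (Sum.inr : V → V ⊕ V) '' X

/-- The vertex set (in the ambient graph) of a connected component of an induced subgraph. -/
def compSupp {V : Type*} {s : Set V} {H : SimpleGraph s}
    (c : H.ConnectedComponent) : Set V :=
  Subtype.val '' c.supp

/-- If all events of `C` occupy a consecutive block of positions in an interval model of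
`G`, then `C` is a module of `G`: every vertex outside `C` is adjacent to all of `C`
or to none of `C`. -/
theorem statement_9 {V : Type*} [Fintype V] (G : SimpleGraph V)
    (M : IntervalModel G) (C : Set V)
    (hblock : ∀ ε, ε ∉ eventsOf C →
      (∀ ε' ∈ eventsOf C, M.σ ε < M.σ ε') ∨ (∀ ε' ∈ eventsOf C, M.σ ε' < M.σ ε)) :
    ∀ v, v ∉ C → (∀ c ∈ C, G.Adj v c) ∨ (∀ c ∈ C, ¬ G.Adj v c) := by

  intro v hv
  have hne : ∀ c ∈ C, v ≠ c := fun c hc h => hv (h ▸ hc)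
  have hmemL : Sum.inl v ∉ eventsOf C := by
    rintro (⟨c, hc, h⟩ | ⟨c, hc, h⟩)
    · exact hv (Sum.inl.inj h ▸ hc)
    · exact Sum.inr_ne_inl h
  have hmemR : Sum.inr v ∉ eventsOf C := by
    rintro (⟨c, hc, h⟩ | ⟨c, hc, h⟩)
    · exact Sum.inl_ne_inr h
    · exact hv (Sum.inr.inj h ▸ hc)
  have hInlC : ∀ c ∈ C, Sum.inl c ∈ eventsOf C := fun c hc => Or.inl ⟨c, hc, rfl⟩
  have hInrC : ∀ c ∈ C, Sum.inr c ∈ eventsOf C := fun c hc => Or.inr ⟨c, hc, rfl⟩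
  rcases hblock _ hmemL with hL | hL <;> rcases hblock _ hmemR with hR | hR
  · -- both before: no adjacency
    refine Or.inr fun c hc => ?_
    exact (M.adjIff v c (hne c hc)).mpr (Or.inr (hR _ (hInlC c hc)))
  · -- beg before, end after: adjacent to all
    refine Or.inl fun c hc => ?_
    by_contra hna
    rcases (M.adjIff v c (hne c hc)).mp hna with h | h
    · exact absurd (hL _ (hInrC c hc)) (not_lt.mpr h.le)
    · exact absurd (hR _ (hInlC c hc)) (not_lt.mpr h.le)
  · -- beg after, end before: contradiction unless C empty
    refine Or.inr fun c hc => ?_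
    have h1 := hL _ (hInrC c hc)
    have h2 := hR _ (hInrC c hc)
    have := M.begEnd v
    omega
  · -- both after: no adjacency
    refine Or.inr fun c hc => ?_
    exact (M.adjIff v c (hne c hc)).mpr (Or.inl (hL _ (hInrC c hc)))
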